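/- (Exponential moment bound for conditional information content.) Let (X,Y) ∈ ℝ^{2k} × ℝ have joint density f_{XY}, and define L(t) = ∫ f_{Y|X}(y|x)^t f_X(x) dμ(x,y) for t > 0. Assume L(t) < ∞ for all t > 0. Fix any Q̄ > 0, set K₁ = max{ sup_{t ∈ (0,1]} t²·(t L(t))'' , sup_{t > 1} t²·(Q̄^{1−t} L(t))'' }, and assume K₁ < ∞. Define h̃(Y|X) = −log f_{Y|X}(Y|X) and h(Y|X) = E[h̃(Y|X)]. Then for all μ ∈ ℝ, E[exp(μ(h̃(Y|X) − h(Y|X)))] ≤ exp((K₁+1)·r(−μ)), where r(u) = u − log(1+u) for u > −1 and r(u) = +∞ otherwise. -/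

import Mathlib

open MeasureTheory ProbabilityTheory Filter Topology Real
open scoped ENNReal NNReal

noncomputable section

namespace CondInfo

/-- Marginal density of `X` obtained from the joint density `f` of `(X, Y)`. -/
def margX {k : ℕ} (f : ((Fin (2 * k) → ℝ) × ℝ) → ℝ) (x : Fin (2 * k) → ℝ) : ℝ :=
  ∫ y, f (x, y)

/-- Conditional density `f_{Y|X}(y|x) = f_{XY}(x,y) / f_X(x)`. -/
def condD {k : ℕ} (f : ((Fin (2 * k) → ℝ) × ℝ) → ℝ) (p : (Fin (2 * k) → ℝ) × ℝ) : ℝ :=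
  f p / margX f p.1

/-- `L(t) = ∫ f_{Y|X}(y|x)^t f_X(x) dμ(x,y)`. -/
def Lmom {k : ℕ} (f : ((Fin (2 * k) → ℝ) × ℝ) → ℝ) (t : ℝ) : ℝ :=
  (∫⁻ p, ENNReal.ofReal (condD f p ^ t * margX f p.1)).toReal

/-- The conditional differential entropy `h(Y|X) = −∫ f_{XY} log f_{Y|X}`. -/
def hYX {k : ℕ} (f : ((Fin (2 * k) → ℝ) × ℝ) → ℝ) : ℝ :=
  -∫ p, f p * Real.log (condD f p)

/-- The set whose supremum is the first term in the definition of `K₁`. -/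
def K1setA {k : ℕ} (f : ((Fin (2 * k) → ℝ) × ℝ) → ℝ) : Set ℝ :=
  (fun t => t ^ 2 * iteratedDeriv 2 (fun u => u * Lmom f u) t) '' Set.Ioc (0 : ℝ) 1

/-- The set whose supremum is the second term in the definition of `K₁`. -/
def K1setB {k : ℕ} (f : ((Fin (2 * k) → ℝ) × ℝ) → ℝ) (Q : ℝ) : Set ℝ :=
  (fun t => t ^ 2 * iteratedDeriv 2 (fun u => Q ^ (1 - u) * Lmom f u) t) '' Set.Ioi (1 : ℝ)

/-- `K₁ = max{ sup_{t∈(0,1]} t² (t L(t))'' , sup_{t>1} t² (Q̄^{1−t} L(t))'' }`. -/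
def K1 {k : ℕ} (f : ((Fin (2 * k) → ℝ) × ℝ) → ℝ) (Q : ℝ) : ℝ :=
  max (sSup (K1setA f)) (sSup (K1setB f Q))

/-- The rate function `r(u) = u − log(1+u)` for `u > −1`, `+∞` otherwise
(valued in `ℝ≥0∞`). -/
def rfun (u : ℝ) : ℝ≥0∞ :=
  if -1 < u then ENNReal.ofReal (u - Real.log (1 + u)) else ⊤

/-- `exp(c · e)` for `e ∈ ℝ≥0∞` (equal to `⊤` when `e = ⊤`). -/
def expRate (c : ℝ) (e : ℝ≥0∞) : ℝ≥0∞ :=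
  if e = ⊤ then ⊤ else ENNReal.ofReal (Real.exp (c * e.toReal))

end CondInfo

open CondInfo

namespace CIAux

variable {k : ℕ} {f : ((Fin (2 * k) → ℝ) × ℝ) → ℝ}

lemma mMarg (hm : Measurable f) : Measurable (margX f) :=
  (hm.stronglyMeasurable.integral_prod_right').measurable

lemma mCond (hm : Measurable f) : Measurable (condD f) :=
  hm.div ((mMarg hm).comp measurable_fst)

lemma margX_nonneg (hpos : ∀ p, 0 ≤ f p) (x : Fin (2 * k) → ℝ) : 0 ≤ margX f x :=
  integral_nonneg fun y => hpos (x, y)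

lemma condD_nonneg (hpos : ∀ p, 0 ≤ f p) (p : (Fin (2 * k) → ℝ) × ℝ) : 0 ≤ condD f p :=
  div_nonneg (hpos p) (margX_nonneg hpos p.1)

lemma mF (hm : Measurable f) (j : ℕ) {u : ℝ} (hu : 0 ≤ u) :
    Measurable fun p => condD f p ^ u * (Real.log (condD f p) ^ j * margX f p.1) := by
  exact (((Real.continuous_rpow_const hu).measurable).comp (mCond hm)).mul
    ((((Real.measurable_log.comp (mCond hm)).pow_const j)).mul ((mMarg hm).comp measurable_fst))

lemma ae_struct (hm : Measurable f) (hpos : ∀ p, 0 ≤ f p)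
    (hint : ∫⁻ p, ENNReal.ofReal (f p) = 1) :
    ∀ᵐ p : (Fin (2 * k) → ℝ) × ℝ, f p = condD f p * margX f p.1 := by
  have hprod : (volume : Measure ((Fin (2 * k) → ℝ) × ℝ)) = volume.prod volume :=
    Measure.volume_eq_prod _ _
  have hms : MeasurableSet {p : (Fin (2 * k) → ℝ) × ℝ | f p = condD f p * margX f p.1} := by
    exact measurableSet_eq_fun hm ((mCond hm).mul ((mMarg hm).comp measurable_fst))
  rw [hprod, Measure.ae_prod_iff_ae_ae hms]
  have hmof : Measurable fun p : (Fin (2 * k) → ℝ) × ℝ => ENNReal.ofReal (f p) :=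
    hm.ennreal_ofReal
  have hfin : ∫⁻ x, ∫⁻ y, ENNReal.ofReal (f (x, y)) ≠ ⊤ := by
    rw [← MeasureTheory.lintegral_prod _ hmof.aemeasurable, ← hprod, hint]
    exact ENNReal.one_ne_top
  have hae : ∀ᵐ x : Fin (2 * k) → ℝ, (∫⁻ y, ENNReal.ofReal (f (x, y))) < ⊤ :=
    ae_lt_top (hmof.lintegral_prod_right') hfin
  filter_upwards [hae] with x hx
  have hmx : Measurable fun y => ENNReal.ofReal (f (x, y)) := by
    exact hmof.comp (measurable_prodMk_left)
  have hintx : Integrable (fun y => f (x, y)) := by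
    refine ⟨(hm.comp measurable_prodMk_left).aestronglyMeasurable, ?_⟩
    rw [hasFiniteIntegral_iff_norm]
    convert hx using 1
    refine lintegral_congr fun y => ?_
    rw [Real.norm_eq_abs, abs_of_nonneg (hpos _)]
  have hmarg : margX f x = (∫⁻ y, ENNReal.ofReal (f (x, y))).toReal := by
    rw [margX, integral_eq_lintegral_of_nonneg_ae (Eventually.of_forall fun y => hpos _)
      (hm.comp measurable_prodMk_left).aestronglyMeasurable]
  by_cases h0 : margX f x = 0
  · have : (∫⁻ y, ENNReal.ofReal (f (x, y))) = 0 := by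
      rw [hmarg] at h0
      exact (ENNReal.toReal_eq_zero_iff _).mp h0 |>.resolve_right hx.ne
    have hz : (fun y => ENNReal.ofReal (f (x, y))) =ᵐ[volume] 0 :=
      (lintegral_eq_zero_iff hmx).mp this
    filter_upwards [hz] with y hy
    have : f (x, y) = 0 := by
      have := hpos (x, y)
      simpa [ENNReal.ofReal_eq_zero] using le_antisymm (by simpa [ENNReal.ofReal_eq_zero] using hy) this
    simp only [Set.mem_setOf_eq, this, h0, mul_zero]
  · refine Eventually.of_forall fun y => ?_
    simp only [Set.mem_setOf_eq, condD]
    rw [div_mul_cancel₀ _ h0]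


/-- pure pointwise bound: `|log g| ≤ ε⁻¹ (g^ε + g^(-ε))` for `g > 0`. -/
lemma abs_log_le {g ε : ℝ} (hg : 0 < g) (hε : 0 < ε) :
    |Real.log g| ≤ ε⁻¹ * (g ^ ε + g ^ (-ε)) := by
  rcases le_or_gt 1 g with h1 | h1
  · have hlog : 0 ≤ Real.log g := Real.log_nonneg h1
    rw [abs_of_nonneg hlog]
    have h2 : Real.log g = ε⁻¹ * Real.log (g ^ ε) := by
      rw [Real.log_rpow hg]; field_simp
    rw [h2]
    have h3 : Real.log (g ^ ε) ≤ g ^ ε - 1 := Real.log_le_sub_one_of_pos (Real.rpow_pos_of_pos hg ε)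
    have h4 : (0:ℝ) ≤ g ^ (-ε) := (Real.rpow_pos_of_pos hg _).le
    have := inv_pos.mpr hε
    nlinarith
  · have hlog : Real.log g < 0 := Real.log_neg hg h1
    rw [abs_of_neg hlog]
    have h2 : -Real.log g = ε⁻¹ * Real.log (g ^ (-ε)) := by
      rw [Real.log_rpow hg]; field_simp
    rw [h2]
    have h3 : Real.log (g ^ (-ε)) ≤ g ^ (-ε) - 1 :=
      Real.log_le_sub_one_of_pos (Real.rpow_pos_of_pos hg _)
    have h4 : (0:ℝ) ≤ g ^ ε := (Real.rpow_pos_of_pos hg _).le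
    have := inv_pos.mpr hε
    nlinarith

lemma rpow_abs_log_le {g t ε : ℝ} (hg : 0 ≤ g) (hε : 0 < ε) (hεt : ε < t) :
    g ^ t * |Real.log g| ≤ ε⁻¹ * (g ^ (t + ε) + g ^ (t - ε)) := by
  rcases eq_or_lt_of_le hg with h0 | h0
  · rw [← h0, Real.zero_rpow (by linarith : t ≠ 0)]
    have h1 : (0:ℝ) ^ (t + ε) = 0 := Real.zero_rpow (by linarith)
    have h2 : (0:ℝ) ^ (t - ε) = 0 := Real.zero_rpow (sub_pos.mpr hεt).ne'
    simp [h1, h2]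
  · have h1 := abs_log_le h0 hε
    have h2 : g ^ t * |Real.log g| ≤ g ^ t * (ε⁻¹ * (g ^ ε + g ^ (-ε))) :=
      mul_le_mul_of_nonneg_left h1 (Real.rpow_pos_of_pos h0 t).le
    calc g ^ t * |Real.log g| ≤ g ^ t * (ε⁻¹ * (g ^ ε + g ^ (-ε))) := h2
      _ = ε⁻¹ * (g ^ (t + ε) + g ^ (t - ε)) := by
          rw [Real.rpow_add h0, sub_eq_add_neg, Real.rpow_add h0]
          ring

lemma rpow_sq_log_le {g t ε : ℝ} (hg : 0 ≤ g) (hε : 0 < ε) (hεt : ε < t) :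
    g ^ t * Real.log g ^ 2 ≤ 8 * (ε ^ 2)⁻¹ * (g ^ (t + ε) + g ^ (t - ε)) := by
  rcases eq_or_lt_of_le hg with h0 | h0
  · rw [← h0, Real.zero_rpow (by linarith : t ≠ 0)]
    have h1 : (0:ℝ) ^ (t + ε) = 0 := Real.zero_rpow (by linarith)
    have h2 : (0:ℝ) ^ (t - ε) = 0 := Real.zero_rpow (sub_pos.mpr hεt).ne'
    simp [h1, h2]
  · have hs : (0:ℝ) < ε / 2 := by linarith
    have h1 := abs_log_le h0 hs
    have h2 : Real.log g ^ 2 ≤ ((ε/2)⁻¹ * (g ^ (ε/2) + g ^ (-(ε/2)))) ^ 2 := by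
      rw [← sq_abs (Real.log g)]
      have hnn : (0:ℝ) ≤ (ε/2)⁻¹ * (g ^ (ε/2) + g ^ (-(ε/2))) := by positivity
      exact pow_le_pow_left₀ (abs_nonneg _) h1 2
    have ha : (0:ℝ) < g ^ (ε/2) := Real.rpow_pos_of_pos h0 _
    have hb : (0:ℝ) < g ^ (-(ε/2)) := Real.rpow_pos_of_pos h0 _
    have hsq : (g ^ (ε/2) + g ^ (-(ε/2))) ^ 2 ≤ 2 * (g ^ ε + g ^ (-ε)) := by
      have e1 : g ^ (ε/2) * g ^ (ε/2) = g ^ ε := by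
        rw [← Real.rpow_add h0]; norm_num
      have e2 : g ^ (-(ε/2)) * g ^ (-(ε/2)) = g ^ (-ε) := by
        rw [← Real.rpow_add h0, show -(ε/2) + -(ε/2) = -ε by ring]
      have e3 : g ^ (ε/2) * g ^ (-(ε/2)) = 1 := by
        rw [← Real.rpow_add h0, show ε/2 + -(ε/2) = (0:ℝ) by ring, Real.rpow_zero]
      have h4 : (0:ℝ) < g ^ ε := Real.rpow_pos_of_pos h0 _
      have h5 : (0:ℝ) < g ^ (-ε) := Real.rpow_pos_of_pos h0 _
      have hAM : (2:ℝ) ≤ g ^ ε + g ^ (-ε) := by nlinarith [sq_nonneg (g ^ (ε/2) - g ^ (-(ε/2)))]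
      nlinarith [sq_nonneg (g ^ (ε/2) - g ^ (-(ε/2)))]
    have h3 : Real.log g ^ 2 ≤ (ε/2)⁻¹ ^ 2 * (2 * (g ^ ε + g ^ (-ε))) := by
      calc Real.log g ^ 2 ≤ ((ε/2)⁻¹ * (g ^ (ε/2) + g ^ (-(ε/2)))) ^ 2 := h2
        _ = (ε/2)⁻¹ ^ 2 * (g ^ (ε/2) + g ^ (-(ε/2))) ^ 2 := by ring
        _ ≤ (ε/2)⁻¹ ^ 2 * (2 * (g ^ ε + g ^ (-ε))) := by
            apply mul_le_mul_of_nonneg_left hsq (by positivity)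
    have h6 : g ^ t * Real.log g ^ 2 ≤ g ^ t * ((ε/2)⁻¹ ^ 2 * (2 * (g ^ ε + g ^ (-ε)))) :=
      mul_le_mul_of_nonneg_left h3 (Real.rpow_pos_of_pos h0 t).le
    calc g ^ t * Real.log g ^ 2 ≤ g ^ t * ((ε/2)⁻¹ ^ 2 * (2 * (g ^ ε + g ^ (-ε)))) := h6
      _ = 8 * (ε ^ 2)⁻¹ * (g ^ (t + ε) + g ^ (t - ε)) := by
          rw [Real.rpow_add h0, sub_eq_add_neg, Real.rpow_add h0]
          field_simp
          ring

lemma rpow_le_add {g a t b : ℝ} (hg : 0 ≤ g) (ha : 0 < a) (hat : a ≤ t) (htb : t ≤ b) :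
    g ^ t ≤ g ^ a + g ^ b := by
  rcases eq_or_lt_of_le hg with h0 | h0
  · rw [← h0, Real.zero_rpow (by linarith : t ≠ 0), Real.zero_rpow (by linarith : a ≠ 0)]
    simp [Real.rpow_nonneg le_rfl]
  · rcases le_or_gt g 1 with h1 | h1
    · have : g ^ t ≤ g ^ a := Real.rpow_le_rpow_of_exponent_ge h0 h1 hat
      have hb : (0:ℝ) ≤ g ^ b := (Real.rpow_pos_of_pos h0 b).le
      linarith
    · have : g ^ t ≤ g ^ b := Real.rpow_le_rpow_of_exponent_le h1.le htb
      have hb : (0:ℝ) ≤ g ^ a := (Real.rpow_pos_of_pos h0 a).le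
      linarith


/-- `Mj j t = ∫ g^t (log g)^j f_X`. -/
def Mj {k : ℕ} (f : ((Fin (2 * k) → ℝ) × ℝ) → ℝ) (j : ℕ) (t : ℝ) : ℝ :=
  ∫ p, condD f p ^ t * (Real.log (condD f p) ^ j * margX f p.1)

variable (hm : Measurable f) (hpos : ∀ p, 0 ≤ f p)
variable (hL : ∀ t : ℝ, 0 < t → ∫⁻ p, ENNReal.ofReal (condD f p ^ t * margX f p.1) < ⊤)

include hm hpos hL in
lemma intF {u : ℝ} (hu : 0 < u) :
    Integrable (fun p => condD f p ^ u * margX f p.1) := by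
  have hmeas : Measurable fun p => condD f p ^ u * margX f p.1 :=
    (((Real.continuous_rpow_const hu.le).measurable).comp (mCond hm)).mul
      ((mMarg hm).comp measurable_fst)
  have hnn : ∀ p, 0 ≤ condD f p ^ u * margX f p.1 := fun p =>
    mul_nonneg (Real.rpow_nonneg (condD_nonneg hpos p) u) (margX_nonneg hpos p.1)
  refine ⟨hmeas.aestronglyMeasurable, ?_⟩
  rw [hasFiniteIntegral_iff_norm]
  calc ∫⁻ p, ENNReal.ofReal ‖condD f p ^ u * margX f p.1‖
      = ∫⁻ p, ENNReal.ofReal (condD f p ^ u * margX f p.1) := by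
        refine lintegral_congr fun p => ?_
        rw [Real.norm_eq_abs, abs_of_nonneg (hnn p)]
    _ < ⊤ := hL u hu

include hm hpos hL in
lemma intMj (j : ℕ) (hj : j ≤ 2) {t : ℝ} (ht : 0 < t) :
    Integrable (fun p => condD f p ^ t * (Real.log (condD f p) ^ j * margX f p.1)) := by
  set ε : ℝ := t / 2 with hε
  have hε0 : 0 < ε := by positivity
  have hεt : ε < t := by rw [hε]; linarith
  have hb1 : Integrable (fun p => condD f p ^ (t + ε) * margX f p.1) :=
    intF hm hpos hL (by linarith)
  have hb2 : Integrable (fun p => condD f p ^ (t - ε) * margX f p.1) :=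
    intF hm hpos hL (by rw [hε]; linarith)
  set C : ℝ := ε⁻¹ + 8 * (ε ^ 2)⁻¹ + 1 with hC
  have hC0 : 0 < C := by positivity
  refine Integrable.mono' (((hb1.add hb2).const_mul C)) ((mF hm j ht.le).aestronglyMeasurable)
    (Eventually.of_forall fun p => ?_)
  have hg : 0 ≤ condD f p := condD_nonneg hpos p
  have hc : 0 ≤ margX f p.1 := margX_nonneg hpos p.1
  have h2 : (0:ℝ) ≤ condD f p ^ (t+ε) + condD f p ^ (t-ε) :=
    add_nonneg (Real.rpow_nonneg hg _) (Real.rpow_nonneg hg _)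
  have key : condD f p ^ t * |Real.log (condD f p)| ^ j
      ≤ C * (condD f p ^ (t + ε) + condD f p ^ (t - ε)) := by
    interval_cases j
    · simp only [pow_zero, mul_one]
      have h4 : condD f p ^ t ≤ condD f p ^ (t - ε) + condD f p ^ (t + ε) :=
        rpow_le_add hg (by rw [hε]; linarith) (by linarith) (by linarith)
      have h31 : (1:ℝ) ≤ C := by
        rw [hC]
        have e1 : (0:ℝ) ≤ ε⁻¹ := by positivity
        have e2 : (0:ℝ) ≤ 8 * (ε ^ 2)⁻¹ := by positivity
        linarith
      calc condD f p ^ t ≤ condD f p ^ (t + ε) + condD f p ^ (t - ε) := by linarith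
        _ = 1 * (condD f p ^ (t + ε) + condD f p ^ (t - ε)) := (one_mul _).symm
        _ ≤ C * (condD f p ^ (t + ε) + condD f p ^ (t - ε)) :=
            mul_le_mul_of_nonneg_right h31 h2
    · have h1 := rpow_abs_log_le hg hε0 hεt
      have h3 : ε⁻¹ ≤ C := by
        rw [hC]
        have : (0:ℝ) ≤ 8 * (ε ^ 2)⁻¹ := by positivity
        linarith
      simp only [pow_one]
      exact h1.trans (mul_le_mul_of_nonneg_right h3 h2)
    · have h1 := rpow_sq_log_le hg hε0 hεt
      have h3 : 8 * (ε ^ 2)⁻¹ ≤ C := by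
        rw [hC]
        have : (0:ℝ) ≤ ε⁻¹ := by positivity
        linarith
      rw [sq_abs]
      exact h1.trans (mul_le_mul_of_nonneg_right h3 h2)
  calc ‖condD f p ^ t * (Real.log (condD f p) ^ j * margX f p.1)‖
      = condD f p ^ t * |Real.log (condD f p)| ^ j * margX f p.1 := by
        rw [Real.norm_eq_abs, abs_mul, abs_mul, abs_of_nonneg (Real.rpow_nonneg hg t),
          abs_of_nonneg hc, abs_pow]
        ring
    _ ≤ C * (condD f p ^ (t + ε) + condD f p ^ (t - ε)) * margX f p.1 :=
        mul_le_mul_of_nonneg_right key hc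
    _ = C * ((fun p => condD f p ^ (t + ε) * margX f p.1)
        + fun p => condD f p ^ (t - ε) * margX f p.1) p := by
        simp only [Pi.add_apply]
        ring


/-- pointwise derivative of `s ↦ g^s * C` for `g ≥ 0`, at `s > 0`. -/
lemma hasDerivAt_rpow_mul {g C u : ℝ} (hg : 0 ≤ g) (hu : 0 < u) :
    HasDerivAt (fun s => g ^ s * C) (g ^ u * (Real.log g * C)) u := by
  rcases eq_or_lt_of_le hg with h0 | h0
  · have hev : (fun s => g ^ s * C) =ᶠ[𝓝 u] fun _ => 0 := by
      filter_upwards [Ioi_mem_nhds hu] with s hs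
      rw [← h0, Real.zero_rpow (ne_of_gt hs), zero_mul]
    have h1 : HasDerivAt (fun _ : ℝ => (0:ℝ)) 0 u := hasDerivAt_const u 0
    have h2 := h1.congr_of_eventuallyEq hev
    rw [show g ^ u * (Real.log g * C) = 0 by rw [← h0, Real.zero_rpow (ne_of_gt hu), zero_mul]]
    exact h2
  · have := ((Real.hasStrictDerivAt_const_rpow h0 u).hasDerivAt).mul_const C
    exact this.congr_deriv (by ring)

include hm hpos hL in
lemma hasDerivAt_Mj (j : ℕ) (hj : j ≤ 1) {t : ℝ} (ht : 0 < t) :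
    HasDerivAt (Mj f j) (Mj f (j + 1) t) t := by
  set δ : ℝ := t / 4 with hδ
  have hδ0 : 0 < δ := by positivity
  set ε : ℝ := t / 4 with hε
  have hε0 : 0 < ε := by positivity
  set C : ℝ := ε⁻¹ + 8 * (ε ^ 2)⁻¹ + 1 with hC
  have hC0 : 0 < C := by positivity
  have hb1 : Integrable (fun p => condD f p ^ (t / 4) * margX f p.1) :=
    intF hm hpos hL (by positivity)
  have hb2 : Integrable (fun p => condD f p ^ (2 * t) * margX f p.1) :=
    intF hm hpos hL (by positivity)
  have hbound_int : Integrable (fun p =>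
      (2 * C) * (condD f p ^ (t / 4) * margX f p.1 + condD f p ^ (2 * t) * margX f p.1)) :=
    (hb1.add hb2).const_mul _
  have key := hasDerivAt_integral_of_dominated_loc_of_deriv_le (μ := volume)
    (F := fun u p => condD f p ^ u * (Real.log (condD f p) ^ j * margX f p.1))
    (F' := fun u p => condD f p ^ u * (Real.log (condD f p) ^ (j + 1) * margX f p.1))
    (x₀ := t)
    (bound := fun p => (2 * C) * (condD f p ^ (t / 4) * margX f p.1
      + condD f p ^ (2 * t) * margX f p.1))
    (Metric.ball_mem_nhds t hδ0) ?_ ?_ ?_ ?_ hbound_int ?_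
  · exact key.2
  · -- measurability in a neighborhood
    filter_upwards [Ioi_mem_nhds ht] with u hu
    exact (mF hm j (le_of_lt hu)).aestronglyMeasurable
  · exact intMj hm hpos hL j (by omega) ht
  · exact (mF hm (j + 1) ht.le).aestronglyMeasurable
  · -- bound
    refine Eventually.of_forall fun p => fun u hu => ?_
    have hg : 0 ≤ condD f p := condD_nonneg hpos p
    have hc : 0 ≤ margX f p.1 := margX_nonneg hpos p.1
    have hud : |u - t| < δ := by
      have := Metric.mem_ball.mp hu
      rwa [Real.dist_eq] at this
    have hu1 : t - δ < u := by cases' abs_lt.mp hud with h1 h2; linarith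
    have hu2 : u < t + δ := by cases' abs_lt.mp hud with h1 h2; linarith
    have hεu : ε < u := by rw [hε]; rw [hδ] at hu1; linarith
    have key1 : condD f p ^ u * |Real.log (condD f p)| ^ (j + 1)
        ≤ C * (condD f p ^ (u + ε) + condD f p ^ (u - ε)) := by
      have h2 : (0:ℝ) ≤ condD f p ^ (u+ε) + condD f p ^ (u-ε) :=
        add_nonneg (Real.rpow_nonneg hg _) (Real.rpow_nonneg hg _)
      interval_cases j
      · have h1 := rpow_abs_log_le hg hε0 hεu
        have h3 : ε⁻¹ ≤ C := by
          rw [hC]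
          have : (0:ℝ) ≤ 8 * (ε ^ 2)⁻¹ := by positivity
          linarith
        simp only [zero_add, pow_one]
        exact h1.trans (mul_le_mul_of_nonneg_right h3 h2)
      · have h1 := rpow_sq_log_le hg hε0 hεu
        have h3 : 8 * (ε ^ 2)⁻¹ ≤ C := by
          rw [hC]
          have : (0:ℝ) ≤ ε⁻¹ := by positivity
          linarith
        rw [show (1+1) = 2 from rfl, sq_abs]
        exact h1.trans (mul_le_mul_of_nonneg_right h3 h2)
    have key2 : condD f p ^ (u + ε) + condD f p ^ (u - ε)
        ≤ 2 * (condD f p ^ (t / 4) + condD f p ^ (2 * t)) := by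
      have e1 : condD f p ^ (u + ε) ≤ condD f p ^ (t / 4) + condD f p ^ (2 * t) := by
        apply rpow_le_add hg (by positivity)
        · rw [hε]; rw [hδ] at hu1; linarith
        · rw [hε]; rw [hδ] at hu2; linarith
      have e2 : condD f p ^ (u - ε) ≤ condD f p ^ (t / 4) + condD f p ^ (2 * t) := by
        apply rpow_le_add hg (by positivity)
        · rw [hε]; rw [hδ] at hu1; linarith
        · rw [hε]; rw [hδ] at hu2; linarith
      linarith
    calc ‖condD f p ^ u * (Real.log (condD f p) ^ (j+1) * margX f p.1)‖
        = condD f p ^ u * |Real.log (condD f p)| ^ (j+1) * margX f p.1 := by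
          rw [Real.norm_eq_abs, abs_mul, abs_mul, abs_of_nonneg (Real.rpow_nonneg hg u),
            abs_of_nonneg hc, abs_pow]
          ring
      _ ≤ C * (condD f p ^ (u + ε) + condD f p ^ (u - ε)) * margX f p.1 :=
          mul_le_mul_of_nonneg_right key1 hc
      _ ≤ C * (2 * (condD f p ^ (t / 4) + condD f p ^ (2 * t))) * margX f p.1 := by
          apply mul_le_mul_of_nonneg_right _ hc
          exact mul_le_mul_of_nonneg_left key2 hC0.le
      _ = (2 * C) * (condD f p ^ (t / 4) * margX f p.1 + condD f p ^ (2 * t) * margX f p.1) := by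
          ring
  · -- differentiability
    refine Eventually.of_forall fun p => fun u hu => ?_
    have hg : 0 ≤ condD f p := condD_nonneg hpos p
    have hud : |u - t| < δ := by
      have := Metric.mem_ball.mp hu
      rwa [Real.dist_eq] at this
    have hu0 : 0 < u := by cases' abs_lt.mp hud with h1 h2; rw [hδ] at h1; linarith
    have hd := hasDerivAt_rpow_mul (C := Real.log (condD f p) ^ j * margX f p.1) hg hu0
    have heq : condD f p ^ u * (Real.log (condD f p) ^ (j + 1) * margX f p.1)
        = condD f p ^ u * (Real.log (condD f p) * (Real.log (condD f p) ^ j * margX f p.1)) := by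
      rw [pow_succ]; ring
    simpa [heq] using hd

include hm hpos hL in
lemma Lmom_eq_Mj0 {t : ℝ} (ht : 0 < t) : Lmom f t = Mj f 0 t := by
  have hnn : ∀ p : (Fin (2 * k) → ℝ) × ℝ, 0 ≤ condD f p ^ t * margX f p.1 := fun p =>
    mul_nonneg (Real.rpow_nonneg (condD_nonneg hpos p) t) (margX_nonneg hpos p.1)
  have := integral_eq_lintegral_of_nonneg_ae (μ := volume)
    (f := fun p => condD f p ^ t * margX f p.1)
    (Eventually.of_forall hnn) ((intF hm hpos hL ht).aestronglyMeasurable)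
  rw [Lmom, ← this, Mj]
  simp only [pow_zero, one_mul]


variable (hint : ∫⁻ p, ENNReal.ofReal (f p) = 1)

include hm hpos hint in
lemma Mj0_one : Mj f 0 1 = 1 := by
  have hae := ae_struct hm hpos hint
  have h1 : Mj f 0 1 = ∫ p, f p := by
    rw [Mj]
    refine integral_congr_ae ?_
    filter_upwards [hae] with p hp
    simp only [pow_zero, one_mul, Real.rpow_one]
    exact hp.symm
  rw [h1, integral_eq_lintegral_of_nonneg_ae (Eventually.of_forall hpos)
    hm.aestronglyMeasurable, hint]
  simp

include hm hpos hint in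
lemma Mj1_one : Mj f 1 1 = -hYX f := by
  have hae := ae_struct hm hpos hint
  have h1 : Mj f 1 1 = ∫ p, f p * Real.log (condD f p) := by
    rw [Mj]
    refine integral_congr_ae ?_
    filter_upwards [hae] with p hp
    simp only [pow_one, Real.rpow_one]
    rw [hp]
    ring
  rw [h1, hYX, neg_neg]

include hm hpos hL in
lemma hasDerivAt_G1 {u : ℝ} (hu : 0 < u) :
    HasDerivAt (fun s => s * Lmom f s) (Mj f 0 u + u * Mj f 1 u) u := by
  have hev : (fun s => s * Mj f 0 s) =ᶠ[𝓝 u] (fun s => s * Lmom f s) := by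
    filter_upwards [Ioi_mem_nhds hu] with s hs
    rw [Lmom_eq_Mj0 hm hpos hL hs]
  have hd : HasDerivAt (fun s => s * Mj f 0 s) (1 * Mj f 0 u + u * Mj f 1 u) u :=
    (hasDerivAt_id u).mul (hasDerivAt_Mj hm hpos hL 0 (by norm_num) hu)
  have := hd.congr_of_eventuallyEq hev.symm
  simpa using this

include hm hpos hL in
lemma hasDerivAt_G2 {u : ℝ} (hu : 0 < u) :
    HasDerivAt (fun s => Mj f 0 s + s * Mj f 1 s) (2 * Mj f 1 u + u * Mj f 2 u) u := by
  have hd : HasDerivAt (fun s => Mj f 0 s + s * Mj f 1 s)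
      (Mj f 1 u + (1 * Mj f 1 u + u * Mj f 2 u)) u :=
    (hasDerivAt_Mj hm hpos hL 0 (by norm_num) hu).add
      ((hasDerivAt_id u).mul (hasDerivAt_Mj hm hpos hL 1 (by norm_num) hu))
  convert hd using 1
  ring

include hm hpos hL in
lemma iterated2A {t : ℝ} (ht : 0 < t) :
    iteratedDeriv 2 (fun u => u * Lmom f u) t = 2 * Mj f 1 t + t * Mj f 2 t := by
  have hder : deriv (fun s => s * Lmom f s) =ᶠ[𝓝 t]
      (fun u => Mj f 0 u + u * Mj f 1 u) := by
    filter_upwards [Ioi_mem_nhds ht] with u hu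
    exact (hasDerivAt_G1 hm hpos hL hu).deriv
  rw [iteratedDeriv_succ, iteratedDeriv_one, hder.deriv_eq]
  exact (hasDerivAt_G2 hm hpos hL ht).deriv

lemma hasDerivAt_Qpow {Q : ℝ} (hQ : 0 < Q) (u : ℝ) :
    HasDerivAt (fun s : ℝ => Q ^ (1 - s)) (-(Q ^ (1 - u) * Real.log Q)) u := by
  have h1 : HasDerivAt (fun s : ℝ => 1 - s) (-1) u := by
    simpa using (hasDerivAt_id u).const_sub (1:ℝ)
  have h2 := (Real.hasStrictDerivAt_const_rpow hQ (1 - u)).hasDerivAt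
  have := h2.comp u h1
  exact this.congr_deriv (by ring)

include hm hpos hL in
lemma hasDerivAt_H1 {Q : ℝ} (hQ : 0 < Q) {u : ℝ} (hu : 0 < u) :
    HasDerivAt (fun s => Q ^ (1 - s) * Lmom f s)
      (Q ^ (1 - u) * (Mj f 1 u - Real.log Q * Mj f 0 u)) u := by
  have hev : (fun s => Q ^ (1 - s) * Mj f 0 s) =ᶠ[𝓝 u]
      (fun s => Q ^ (1 - s) * Lmom f s) := by
    filter_upwards [Ioi_mem_nhds hu] with s hs
    rw [Lmom_eq_Mj0 hm hpos hL hs]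
  have hd : HasDerivAt (fun s => Q ^ (1 - s) * Mj f 0 s)
      (-(Q ^ (1 - u) * Real.log Q) * Mj f 0 u + Q ^ (1 - u) * Mj f 1 u) u :=
    (hasDerivAt_Qpow hQ u).mul (hasDerivAt_Mj hm hpos hL 0 (by norm_num) hu)
  have := hd.congr_of_eventuallyEq hev.symm
  exact this.congr_deriv (by ring)

include hm hpos hL in
lemma hasDerivAt_H2 {Q : ℝ} (hQ : 0 < Q) {u : ℝ} (hu : 0 < u) :
    HasDerivAt (fun s => Q ^ (1 - s) * (Mj f 1 s - Real.log Q * Mj f 0 s))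
      (Q ^ (1 - u) * (Real.log Q ^ 2 * Mj f 0 u - 2 * Real.log Q * Mj f 1 u + Mj f 2 u)) u := by
  have hd : HasDerivAt (fun s => Q ^ (1 - s) * (Mj f 1 s - Real.log Q * Mj f 0 s))
      (-(Q ^ (1 - u) * Real.log Q) * (Mj f 1 u - Real.log Q * Mj f 0 u)
        + Q ^ (1 - u) * (Mj f 2 u - Real.log Q * Mj f 1 u)) u :=
    (hasDerivAt_Qpow hQ u).mul ((hasDerivAt_Mj hm hpos hL 1 (by norm_num) hu).sub
      ((hasDerivAt_Mj hm hpos hL 0 (by norm_num) hu).const_mul (Real.log Q)))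
  convert hd using 1
  ring

include hm hpos hL in
lemma iterated2B {Q : ℝ} (hQ : 0 < Q) {t : ℝ} (ht : 0 < t) :
    iteratedDeriv 2 (fun u => Q ^ (1 - u) * Lmom f u) t
      = Q ^ (1 - t) * (Real.log Q ^ 2 * Mj f 0 t - 2 * Real.log Q * Mj f 1 t + Mj f 2 t) := by
  have hder : deriv (fun s => Q ^ (1 - s) * Lmom f s) =ᶠ[𝓝 t]
      (fun u => Q ^ (1 - u) * (Mj f 1 u - Real.log Q * Mj f 0 u)) := by
    filter_upwards [Ioi_mem_nhds ht] with u hu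
    exact (hasDerivAt_H1 hm hpos hL hQ hu).deriv
  rw [iteratedDeriv_succ, iteratedDeriv_one, hder.deriv_eq]
  exact (hasDerivAt_H2 hm hpos hL hQ ht).deriv

omit hm hpos hL hint

lemma taylor_left {G Gd Gdd : ℝ → ℝ} {K t : ℝ}
    (h1 : ∀ s, 0 < s → HasDerivAt G (Gd s) s)
    (h2 : ∀ s, 0 < s → HasDerivAt Gd (Gdd s) s)
    (hb : ∀ s, 0 < s → s ≤ 1 → Gdd s ≤ K / s ^ 2)
    (ht : 0 < t) (ht1 : t ≤ 1) :
    G t ≤ G 1 + Gd 1 * (t - 1) + K * (t - 1 - Real.log t) := by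
  rcases eq_or_lt_of_le ht1 with rfl | htlt
  · simp
  set ψ : ℝ → ℝ := fun s => G 1 + Gd 1 * (s - 1) + K * (s - 1 - Real.log s) - G s with hψ
  set ψd : ℝ → ℝ := fun s => Gd 1 + K * (1 - s⁻¹) - Gd s with hψd
  have hdψ : ∀ s, 0 < s → HasDerivAt ψ (ψd s) s := by
    intro s hs
    have hl : HasDerivAt Real.log s⁻¹ s := Real.hasDerivAt_log hs.ne'
    have hd : HasDerivAt (fun s => G 1 + Gd 1 * (s - 1) + K * (s - 1 - Real.log s) - G s)
        (0 + Gd 1 * 1 + K * (1 - s⁻¹) - Gd s) s := by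
      refine HasDerivAt.sub ?_ (h1 s hs)
      refine HasDerivAt.add ?_ ?_
      · exact (hasDerivAt_const s (G 1)).add (((hasDerivAt_id s).sub_const 1).const_mul (Gd 1))
      · have : HasDerivAt (fun s : ℝ => s - 1 - Real.log s) (1 - s⁻¹) s := by
          exact ((hasDerivAt_id s).sub_const 1).sub hl
        exact this.const_mul K
    have : (0 : ℝ) + Gd 1 * 1 + K * (1 - s⁻¹) - Gd s = ψd s := by rw [hψd]; ring
    rwa [this] at hd
  have hdψd : ∀ s, 0 < s → HasDerivAt ψd (K * (s ^ 2)⁻¹ - Gdd s) s := by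
    intro s hs
    have hinv : HasDerivAt (fun s : ℝ => s⁻¹) (-(s ^ 2)⁻¹) s := hasDerivAt_inv hs.ne'
    have hd : HasDerivAt (fun s => Gd 1 + K * (1 - s⁻¹) - Gd s)
        (0 + K * (0 - -(s ^ 2)⁻¹) - Gdd s) s := by
      refine HasDerivAt.sub ?_ (h2 s hs)
      exact (hasDerivAt_const s (Gd 1)).add (((hasDerivAt_const s 1).sub hinv).const_mul K)
    have : (0:ℝ) + K * (0 - -(s ^ 2)⁻¹) - Gdd s = K * (s ^ 2)⁻¹ - Gdd s := by ring
    rwa [this] at hd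
  have hmono : MonotoneOn ψd (Set.Icc t 1) := by
    apply monotoneOn_of_deriv_nonneg (convex_Icc t 1)
    · intro s hs
      exact (hdψd s (lt_of_lt_of_le ht hs.1)).continuousAt.continuousWithinAt
    · intro s hs
      rw [interior_Icc] at hs
      exact (hdψd s (ht.trans hs.1)).differentiableAt.differentiableWithinAt
    · intro s hs
      rw [interior_Icc] at hs
      have hs0 : 0 < s := ht.trans hs.1
      rw [(hdψd s hs0).deriv]
      have hbs := hb s hs0 hs.2.le
      rw [div_eq_mul_inv] at hbs
      linarith
  have hψd1 : ψd 1 = 0 := by rw [hψd]; simp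
  have hψdle : ∀ s ∈ Set.Icc t 1, ψd s ≤ 0 := by
    intro s hs
    have := hmono hs (Set.right_mem_Icc.2 ht1) hs.2
    rwa [hψd1] at this
  have hanti : AntitoneOn ψ (Set.Icc t 1) := by
    apply antitoneOn_of_deriv_nonpos (convex_Icc t 1)
    · intro s hs
      exact (hdψ s (lt_of_lt_of_le ht hs.1)).continuousAt.continuousWithinAt
    · intro s hs
      rw [interior_Icc] at hs
      exact (hdψ s (ht.trans hs.1)).differentiableAt.differentiableWithinAt
    · intro s hs
      rw [interior_Icc] at hs
      rw [(hdψ s (ht.trans hs.1)).deriv]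
      exact hψdle s ⟨hs.1.le, hs.2.le⟩
  have hψ1 : ψ 1 = 0 := by rw [hψ]; simp
  have h := hanti (Set.left_mem_Icc.2 ht1) (Set.right_mem_Icc.2 ht1) ht1
  rw [hψ1] at h
  have : 0 ≤ G 1 + Gd 1 * (t - 1) + K * (t - 1 - Real.log t) - G t := h
  linarith

lemma taylor_right {G Gd Gdd : ℝ → ℝ} {K t : ℝ}
    (h1 : ∀ s, 0 < s → HasDerivAt G (Gd s) s)
    (h2 : ∀ s, 0 < s → HasDerivAt Gd (Gdd s) s)
    (hb : ∀ s, 1 < s → Gdd s ≤ K / s ^ 2)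
    (ht : 1 < t) :
    G t ≤ G 1 + Gd 1 * (t - 1) + K * (t - 1 - Real.log t) := by
  set ψ : ℝ → ℝ := fun s => G 1 + Gd 1 * (s - 1) + K * (s - 1 - Real.log s) - G s with hψ
  set ψd : ℝ → ℝ := fun s => Gd 1 + K * (1 - s⁻¹) - Gd s with hψd
  have hdψ : ∀ s, 0 < s → HasDerivAt ψ (ψd s) s := by
    intro s hs
    have hl : HasDerivAt Real.log s⁻¹ s := Real.hasDerivAt_log hs.ne'
    have hd : HasDerivAt (fun s => G 1 + Gd 1 * (s - 1) + K * (s - 1 - Real.log s) - G s)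
        (0 + Gd 1 * 1 + K * (1 - s⁻¹) - Gd s) s := by
      refine HasDerivAt.sub ?_ (h1 s hs)
      refine HasDerivAt.add ?_ ?_
      · exact (hasDerivAt_const s (G 1)).add (((hasDerivAt_id s).sub_const 1).const_mul (Gd 1))
      · have : HasDerivAt (fun s : ℝ => s - 1 - Real.log s) (1 - s⁻¹) s := by
          exact ((hasDerivAt_id s).sub_const 1).sub hl
        exact this.const_mul K
    have : (0 : ℝ) + Gd 1 * 1 + K * (1 - s⁻¹) - Gd s = ψd s := by rw [hψd]; ring
    rwa [this] at hd
  have hdψd : ∀ s, 0 < s → HasDerivAt ψd (K * (s ^ 2)⁻¹ - Gdd s) s := by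
    intro s hs
    have hinv : HasDerivAt (fun s : ℝ => s⁻¹) (-(s ^ 2)⁻¹) s := hasDerivAt_inv hs.ne'
    have hd : HasDerivAt (fun s => Gd 1 + K * (1 - s⁻¹) - Gd s)
        (0 + K * (0 - -(s ^ 2)⁻¹) - Gdd s) s := by
      refine HasDerivAt.sub ?_ (h2 s hs)
      exact (hasDerivAt_const s (Gd 1)).add (((hasDerivAt_const s 1).sub hinv).const_mul K)
    have : (0:ℝ) + K * (0 - -(s ^ 2)⁻¹) - Gdd s = K * (s ^ 2)⁻¹ - Gdd s := by ring
    rwa [this] at hd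
  have hmono : MonotoneOn ψd (Set.Icc 1 t) := by
    apply monotoneOn_of_deriv_nonneg (convex_Icc 1 t)
    · intro s hs
      exact (hdψd s (lt_of_lt_of_le one_pos hs.1)).continuousAt.continuousWithinAt
    · intro s hs
      rw [interior_Icc] at hs
      exact (hdψd s (one_pos.trans hs.1)).differentiableAt.differentiableWithinAt
    · intro s hs
      rw [interior_Icc] at hs
      have hs0 : 0 < s := one_pos.trans hs.1
      rw [(hdψd s hs0).deriv]
      have hbs := hb s hs.1
      rw [div_eq_mul_inv] at hbs
      linarith
  have hψd1 : ψd 1 = 0 := by rw [hψd]; simp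
  have hψdge : ∀ s ∈ Set.Icc 1 t, 0 ≤ ψd s := by
    intro s hs
    have := hmono (Set.left_mem_Icc.2 ht.le) hs hs.1
    rwa [hψd1] at this
  have hmonoψ : MonotoneOn ψ (Set.Icc 1 t) := by
    apply monotoneOn_of_deriv_nonneg (convex_Icc 1 t)
    · intro s hs
      exact (hdψ s (lt_of_lt_of_le one_pos hs.1)).continuousAt.continuousWithinAt
    · intro s hs
      rw [interior_Icc] at hs
      exact (hdψ s (one_pos.trans hs.1)).differentiableAt.differentiableWithinAt
    · intro s hs
      rw [interior_Icc] at hs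
      rw [(hdψ s (one_pos.trans hs.1)).deriv]
      exact hψdge s ⟨hs.1.le, hs.2.le⟩
  have hψ1 : ψ 1 = 0 := by rw [hψ]; simp
  have h := hmonoψ (Set.left_mem_Icc.2 ht.le) (Set.right_mem_Icc.2 ht.le) ht.le
  rw [hψ1] at h
  have : 0 ≤ G 1 + Gd 1 * (t - 1) + K * (t - 1 - Real.log t) - G t := h
  linarith

end CIAux

/-- **Exponential moment bound for the conditional information content**
(Proposition 1). -/
theorem exp_moment_conditional_information
    (k : ℕ) (f : ((Fin (2 * k) → ℝ) × ℝ) → ℝ)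
    (hmeas : Measurable f) (hpos : ∀ p, 0 ≤ f p)
    (hint : ∫⁻ p, ENNReal.ofReal (f p) = 1)
    -- `L(t) < ∞` for all `t > 0`
    (hL : ∀ t : ℝ, 0 < t → ∫⁻ p, ENNReal.ofReal (condD f p ^ t * margX f p.1) < ⊤)
    (Q : ℝ) (hQ : 0 < Q)
    -- `K₁ < ∞`
    (hK : BddAbove (K1setA f) ∧ BddAbove (K1setB f Q)) :
    ∀ μ : ℝ,
      ∫⁻ p, ENNReal.ofReal (Real.exp (μ * ((-Real.log (condD f p)) - hYX f)))
          ∂(volume.withDensity fun p => ENNReal.ofReal (f p))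
        ≤ expRate (K1 f Q + 1) (rfun (-μ)) := by
  intro μ
  by_cases hμ1 : 1 ≤ μ
  · have h1 : rfun (-μ) = ⊤ := by
      rw [rfun, if_neg]
      push_neg
      linarith
    rw [h1, expRate, if_pos rfl]
    exact le_top
  push_neg at hμ1
  set t : ℝ := 1 - μ with htdef
  have ht : 0 < t := by rw [htdef]; linarith
  -- rewrite LHS
  have hmlog : Measurable fun p => Real.exp (μ * ((-Real.log (condD f p)) - hYX f)) := by
    apply Real.measurable_exp.comp
    exact (((Real.measurable_log.comp (CIAux.mCond hmeas)).neg.sub measurable_const).const_mul μ)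
  have hmint : Measurable fun p => condD f p ^ t * margX f p.1 :=
    (((Real.continuous_rpow_const ht.le).measurable).comp (CIAux.mCond hmeas)).mul
      ((CIAux.mMarg hmeas).comp measurable_fst)
  rw [lintegral_withDensity_eq_lintegral_mul volume hmeas.ennreal_ofReal
    hmlog.ennreal_ofReal]
  have hcong : (fun p => ((fun p => ENNReal.ofReal (f p)) *
        fun p => ENNReal.ofReal (Real.exp (μ * ((-Real.log (condD f p)) - hYX f)))) p)
      =ᵐ[volume] fun p => ENNReal.ofReal (Real.exp (-μ * hYX f))
          * ENNReal.ofReal (condD f p ^ t * margX f p.1) := by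
    filter_upwards [CIAux.ae_struct hmeas hpos hint] with p hp
    simp only [Pi.mul_apply]
    have hg : 0 ≤ condD f p := CIAux.condD_nonneg hpos p
    rw [← ENNReal.ofReal_mul (hpos p), ← ENNReal.ofReal_mul (Real.exp_nonneg _)]
    congr 1
    rcases eq_or_lt_of_le hg with h0 | h0
    · rw [hp, ← h0, Real.zero_rpow ht.ne']
      ring
    · rw [hp, show μ * ((-Real.log (condD f p)) - hYX f)
        = Real.log (condD f p) * (-μ) + (-μ * hYX f) by ring, Real.exp_add,
        ← Real.rpow_def_of_pos h0 (-μ)]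
      have hsplit : condD f p ^ t = condD f p * condD f p ^ (-μ) := by
        rw [htdef, show (1 : ℝ) - μ = 1 + (-μ) by ring, Real.rpow_add h0, Real.rpow_one]
      rw [hsplit]
      ring
  rw [lintegral_congr_ae hcong, lintegral_const_mul _ hmint.ennreal_ofReal]
  have hLofReal : ∫⁻ p, ENNReal.ofReal (condD f p ^ t * margX f p.1)
      = ENNReal.ofReal (Lmom f t) := by
    rw [Lmom, ENNReal.ofReal_toReal (hL t ht).ne]
  rw [hLofReal, ← ENNReal.ofReal_mul (Real.exp_nonneg _)]
  -- rewrite RHS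
  have h1t : (1:ℝ) + -μ = t := by rw [htdef]; ring
  have hμt : -μ = t - 1 := by rw [htdef]; ring
  have hlogle : Real.log t ≤ t - 1 := Real.log_le_sub_one_of_pos ht
  have hr0 : 0 ≤ -μ - Real.log (1 + -μ) := by rw [h1t, hμt]; linarith
  have hrfun : rfun (-μ) = ENNReal.ofReal (-μ - Real.log (1 + -μ)) := by
    rw [rfun, if_pos (by linarith : (-1:ℝ) < -μ)]
  rw [hrfun, expRate, if_neg ENNReal.ofReal_ne_top, ENNReal.toReal_ofReal hr0]
  apply ENNReal.ofReal_le_ofReal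
  rw [h1t, hμt]
  -- the real inequality:  exp((t-1)h) L(t) ≤ exp((K+1)(t-1-log t))
  set K : ℝ := K1 f Q with hKdef
  set h : ℝ := hYX f with hhdef
  -- bounds from the hypothesis
  have hKA : ∀ s : ℝ, 0 < s → s ≤ 1 →
      2 * CIAux.Mj f 1 s + s * CIAux.Mj f 2 s ≤ K / s ^ 2 := by
    intro s hs0 hs1
    have hmem : s ^ 2 * iteratedDeriv 2 (fun u => u * Lmom f u) s ∈ K1setA f :=
      ⟨s, ⟨hs0, hs1⟩, rfl⟩
    have hle1 : s ^ 2 * iteratedDeriv 2 (fun u => u * Lmom f u) s ≤ sSup (K1setA f) :=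
      le_csSup hK.1 hmem
    rw [CIAux.iterated2A hmeas hpos hL hs0] at hle1
    rw [le_div_iff₀ (pow_pos hs0 2)]
    calc (2 * CIAux.Mj f 1 s + s * CIAux.Mj f 2 s) * s ^ 2
        = s ^ 2 * (2 * CIAux.Mj f 1 s + s * CIAux.Mj f 2 s) := by ring
      _ ≤ sSup (K1setA f) := hle1
      _ ≤ K := le_max_left _ _
  have hKB : ∀ s : ℝ, 1 < s →
      Q ^ (1 - s) * (Real.log Q ^ 2 * CIAux.Mj f 0 s - 2 * Real.log Q * CIAux.Mj f 1 s
        + CIAux.Mj f 2 s) ≤ K / s ^ 2 := by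
    intro s hs1
    have hs0 : (0:ℝ) < s := lt_trans one_pos hs1
    have hmem : s ^ 2 * iteratedDeriv 2 (fun u => Q ^ (1 - u) * Lmom f u) s ∈ K1setB f Q :=
      ⟨s, hs1, rfl⟩
    have hle1 : s ^ 2 * iteratedDeriv 2 (fun u => Q ^ (1 - u) * Lmom f u) s
        ≤ sSup (K1setB f Q) := le_csSup hK.2 hmem
    rw [CIAux.iterated2B hmeas hpos hL hQ hs0] at hle1
    rw [le_div_iff₀ (pow_pos hs0 2)]
    calc (Q ^ (1 - s) * (Real.log Q ^ 2 * CIAux.Mj f 0 s - 2 * Real.log Q * CIAux.Mj f 1 s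
          + CIAux.Mj f 2 s)) * s ^ 2
        = s ^ 2 * (Q ^ (1 - s) * (Real.log Q ^ 2 * CIAux.Mj f 0 s
          - 2 * Real.log Q * CIAux.Mj f 1 s + CIAux.Mj f 2 s)) := by ring
      _ ≤ sSup (K1setB f Q) := hle1
      _ ≤ K := le_max_right _ _
  -- values at 1
  have hL1 : Lmom f 1 = 1 := by
    rw [CIAux.Lmom_eq_Mj0 hmeas hpos hL one_pos, CIAux.Mj0_one hmeas hpos hint]
  have hM0 : CIAux.Mj f 0 1 = 1 := CIAux.Mj0_one hmeas hpos hint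
  have hM1 : CIAux.Mj f 1 1 = -h := by rw [hhdef]; exact CIAux.Mj1_one hmeas hpos hint
  rcases le_or_gt t 1 with hcase | hcase
  · -- case 0 < t ≤ 1
    have htay := CIAux.taylor_left (G := fun u => u * Lmom f u)
      (Gd := fun u => CIAux.Mj f 0 u + u * CIAux.Mj f 1 u)
      (Gdd := fun u => 2 * CIAux.Mj f 1 u + u * CIAux.Mj f 2 u) (K := K)
      (fun s hs => CIAux.hasDerivAt_G1 hmeas hpos hL hs)
      (fun s hs => CIAux.hasDerivAt_G2 hmeas hpos hL hs)
      hKA ht hcase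
    simp only [one_mul, hL1, hM0, hM1] at htay
    -- htay : t * Lmom f t ≤ 1 + (1 + 1 * -h) * (t - 1) + K * (t - 1 - Real.log t)
    set x : ℝ := (1 + 1 * -h) * (t - 1) + K * (t - 1 - Real.log t) with hx
    have h1 : Lmom f t ≤ (1 + x) / t := by
      rw [le_div_iff₀ ht]
      calc Lmom f t * t = t * Lmom f t := by ring
        _ ≤ 1 + ((1 + 1 * -h) * (t - 1) + K * (t - 1 - Real.log t)) := by linarith
        _ = 1 + x := by rw [hx]
    have h2 : 1 + x ≤ Real.exp x := by linarith [Real.add_one_le_exp x]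
    calc Real.exp ((t - 1) * h) * Lmom f t
        ≤ Real.exp ((t - 1) * h) * ((1 + x) / t) :=
          mul_le_mul_of_nonneg_left h1 (Real.exp_nonneg _)
      _ ≤ Real.exp ((t - 1) * h) * (Real.exp x / t) := by
          apply mul_le_mul_of_nonneg_left _ (Real.exp_nonneg _)
          exact div_le_div_of_nonneg_right h2 ht.le
      _ = Real.exp ((K + 1) * (t - 1 - Real.log t)) := by
          rw [show Real.exp x / t = Real.exp x / Real.exp (Real.log t) from
            by rw [Real.exp_log ht], ← Real.exp_sub, ← Real.exp_add]
          congr 1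
          rw [hx]
          ring
  · -- case 1 < t
    have htay := CIAux.taylor_right (G := fun u => Q ^ (1 - u) * Lmom f u)
      (Gd := fun u => Q ^ (1 - u) * (CIAux.Mj f 1 u - Real.log Q * CIAux.Mj f 0 u))
      (Gdd := fun u => Q ^ (1 - u) * (Real.log Q ^ 2 * CIAux.Mj f 0 u
        - 2 * Real.log Q * CIAux.Mj f 1 u + CIAux.Mj f 2 u)) (K := K)
      (fun s hs => CIAux.hasDerivAt_H1 hmeas hpos hL hQ hs)
      (fun s hs => CIAux.hasDerivAt_H2 hmeas hpos hL hQ hs)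
      hKB hcase
    simp only [sub_self, Real.rpow_zero, one_mul, hL1, hM0, hM1] at htay
    -- htay : Q^(1-t) * Lmom f t ≤ 1 + (-h - log Q * 1)*(t-1) + K * (t-1-log t)
    set r : ℝ := t - 1 - Real.log t with hrdef
    have hrpos : 0 ≤ r := by rw [hrdef]; linarith
    set y : ℝ := (-h - Real.log Q * 1) * (t - 1) + K * r with hy
    have h1 : Q ^ (1 - t) * Lmom f t ≤ Real.exp y := by
      have := Real.add_one_le_exp y
      calc Q ^ (1 - t) * Lmom f t ≤ 1 + y := by rw [hy]; linarith [hrdef]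
        _ ≤ Real.exp y := by linarith
    have hQpos : (0:ℝ) < Q ^ ((1:ℝ) - t) := Real.rpow_pos_of_pos hQ _
    have hQt : Q ^ (t - 1) * Q ^ ((1:ℝ) - t) = 1 := by
      rw [← Real.rpow_add hQ]
      norm_num
    have hQtpos : (0:ℝ) < Q ^ (t - 1) := Real.rpow_pos_of_pos hQ _
    have hQexp : Q ^ (t - 1) = Real.exp ((t - 1) * Real.log Q) := by
      rw [Real.rpow_def_of_pos hQ]
      ring_nf
    calc Real.exp ((t - 1) * h) * Lmom f t
        = Real.exp ((t - 1) * h) * (Q ^ (t - 1) * (Q ^ ((1:ℝ) - t) * Lmom f t)) := by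
          rw [← mul_assoc (Q ^ (t - 1)), hQt, one_mul]
      _ ≤ Real.exp ((t - 1) * h) * (Q ^ (t - 1) * Real.exp y) := by
          apply mul_le_mul_of_nonneg_left _ (Real.exp_nonneg _)
          exact mul_le_mul_of_nonneg_left h1 hQtpos.le
      _ = Real.exp ((t - 1) * h + ((t - 1) * Real.log Q + y)) := by
          rw [hQexp, ← Real.exp_add, ← Real.exp_add]
      _ ≤ Real.exp ((K + 1) * (t - 1 - Real.log t)) := by
          apply Real.exp_le_exp.mpr
          have he : (t - 1) * h + ((t - 1) * Real.log Q + y) = K * r := by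
            rw [hy]
            ring
          have he2 : (K + 1) * (t - 1 - Real.log t) = K * r + r := by
            rw [hrdef]
            ring
          rw [he, he2]
          linarith
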